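/- Let K be a field of characteristic 2 and let M be an s×s symmetric matrix over K with zero diagonal (a skew-symmetric matrix in characteristic 2). Then M has rank at most 2 if and only if for all indices 1 ≤ i < j < k < l ≤ s one has M_{i,j}M_{k,l} + M_{i,k}M_{j,l} + M_{i,l}M_{j,k} = 0. Consequently, the common zero set of the Pfaffian quadrics m_{i,j}m_{k,l}+m_{i,k}m_{j,l}+m_{i,l}m_{j,k} (1 ≤ i<j<k<l ≤ s) on the space of skew-symmetric s×s matrices coincides with the common zero set of all 4×4 minors. -/

import Mathlib

open Matrix


private lemma det4_expand (K : Type*) [Field K] (a b c d e f : K) :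
    (!![0, a, b, c; a, 0, d, e; b, d, 0, f; c, e, f, 0]).det =
      a*a*f*f + b*b*e*e + c*c*d*d - 2*(a*c*d*f + a*b*e*f + b*c*d*e) := by
  rw [Matrix.det_succ_row_zero]
  simp [Fin.sum_univ_succ, Matrix.det_fin_three, Fin.succAbove]
  ring

private lemma det4_aux (K : Type*) [Field K] [CharP K 2] (N : Matrix (Fin 4) (Fin 4) K)
    (hs : ∀ a b, N a b = N b a) (hd : ∀ i, N i i = 0) :
    N.det = (N 0 1 * N 2 3 + N 0 2 * N 1 3 + N 0 3 * N 1 2) ^ 2 := by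
  have h2 : (2 : K) = 0 := by
    have := CharP.cast_eq_zero K 2
    simpa using this
  have e : N = !![0, N 0 1, N 0 2, N 0 3; N 0 1, 0, N 1 2, N 1 3;
      N 0 2, N 1 2, 0, N 2 3; N 0 3, N 1 3, N 2 3, 0] := by
    ext a b
    fin_cases a <;> fin_cases b <;> simp [hd] <;> first | rfl | exact hs _ _
  conv_lhs => rw [e]
  rw [det4_expand]
  linear_combination (-2*(N 0 1 * N 0 3 * N 1 2 * N 2 3 + N 0 1 * N 0 2 * N 1 3 * N 2 3
    + N 0 2 * N 0 3 * N 1 2 * N 1 3)) * h2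

private lemma pf_all (K : Type*) [Field K] [CharP K 2] {s : ℕ}
    (M : Matrix (Fin s) (Fin s) K)
    (hs : ∀ a b, M a b = M b a) (hd : ∀ i, M i i = 0)
    (hyp : ∀ i j k l : Fin s, i < j → j < k → k < l →
      M i j * M k l + M i k * M j l + M i l * M j k = 0) :
    ∀ i j k l : Fin s, M i j * M k l + M i k * M j l + M i l * M j k = 0 := by
  have h2 : (2 : K) = 0 := by
    have := CharP.cast_eq_zero K 2
    simpa using this
  set P : Fin s → Fin s → Fin s → Fin s → K :=
    fun i j k l => M i j * M k l + M i k * M j l + M i l * M j k with hP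
  show ∀ i j k l, P i j k l = 0
  have s12 : ∀ a b c d, P a b c d = P b a c d := by
    intro a b c d; simp only [hP]; rw [hs a b]; ring
  have s23 : ∀ a b c d, P a b c d = P a c b d := by
    intro a b c d; simp only [hP]; rw [hs c b]; ring
  have s34 : ∀ a b c d, P a b c d = P a b d c := by
    intro a b c d; simp only [hP]; rw [hs d c]; ring
  have deg12 : ∀ a c d, P a a c d = 0 := by
    intro a c d; simp only [hP]; rw [hd a]
    linear_combination (M a c * M a d) * h2
  have deg23 : ∀ a b d, P a b b d = 0 := by
    intro a b d; simp only [hP]; rw [hd b]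
    linear_combination (M a b * M b d) * h2
  have deg34 : ∀ a b c, P a b c c = 0 := by
    intro a b c; simp only [hP]; rw [hd c]
    linear_combination (M a c * M b c) * h2
  have T3 : ∀ i j k l, j < k → k < l → P i j k l = 0 := by
    intro i j k l hjk hkl
    rcases lt_trichotomy i j with h | h | h
    · exact hyp i j k l h hjk hkl
    · rw [h]; exact deg12 j k l
    · rcases lt_trichotomy i k with h' | h' | h'
      · rw [s12]; exact hyp j i k l h h' hkl
      · rw [h', s12]; exact deg23 j k l
      · rcases lt_trichotomy i l with h'' | h'' | h''
        · rw [s12, s23]; exact hyp j k i l hjk h' h''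
        · rw [h'', s12, s23]; exact deg34 j k l
        · rw [s12, s23, s34]; exact hyp j k l i hjk hkl h''
  have T2 : ∀ i j k l, k < l → P i j k l = 0 := by
    intro i j k l hkl
    rcases lt_trichotomy j k with h | h | h
    · exact T3 i j k l h hkl
    · rw [h]; exact deg23 i k l
    · rcases lt_trichotomy j l with h' | h' | h'
      · rw [s23]; exact T3 i k j l h h'
      · rw [h', s34]; exact deg23 i l k
      · rw [s23, s34]; exact T3 i k l j hkl h'
  intro i j k l
  rcases lt_trichotomy k l with h | h | h
  · exact T2 i j k l h
  · rw [h]; exact deg34 i j l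
  · rw [s34]; exact T2 i j l k h

/-- Let `K` be a field of characteristic `2` and `M` an `s×s`
symmetric matrix over `K` with zero diagonal (a skew-symmetric matrix in
characteristic `2`). Then `M` has rank at most `2` iff all Pfaffian quadrics
`M_{i,j}M_{k,l} + M_{i,k}M_{j,l} + M_{i,l}M_{j,k}` (for `i < j < k < l`) vanish;
consequently, the vanishing of all these Pfaffian quadrics is equivalent to the
vanishing of all `4×4` minors of `M`. -/
theorem skewSymmetric_rank_le_two_iff_pfaffians
    (K : Type*) [Field K] [CharP K 2] (s : ℕ)
    (M : Matrix (Fin s) (Fin s) K) (hsym : Mᵀ = M) (hdiag : ∀ i, M i i = 0) :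
    (M.rank ≤ 2 ↔ ∀ i j k l : Fin s, i < j → j < k → k < l →
        M i j * M k l + M i k * M j l + M i l * M j k = 0) ∧
    ((∀ i j k l : Fin s, i < j → j < k → k < l →
        M i j * M k l + M i k * M j l + M i l * M j k = 0) ↔
      ∀ f g : Fin 4 → Fin s, (M.submatrix f g).det = 0) := by
  have hM : ∀ a b, M a b = M b a := fun a b => (congrFun (congrFun hsym a) b).symm
  have h2 : (2 : K) = 0 := by
    have := CharP.cast_eq_zero K 2
    simpa using this
  -- rank ≤ 2 implies all 4×4 minors vanish
  have minors : M.rank ≤ 2 → ∀ f g : Fin 4 → Fin s, (M.submatrix f g).det = 0 := by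
    intro hr f g
    by_contra hdet
    have hrank4 : (M.submatrix f g).rank = 4 := by
      rw [Matrix.rank_of_isUnit _ ((Matrix.isUnit_iff_isUnit_det _).mpr (isUnit_iff_ne_zero.mpr hdet))]
      simp
    have hfact : M.submatrix f g =
        ((1 : Matrix (Fin s) (Fin s) K).submatrix f id) * M *
          ((1 : Matrix (Fin s) (Fin s) K).submatrix id g) := by
      ext a b
      simp [Matrix.mul_apply, Matrix.submatrix_apply, Matrix.one_apply, Finset.sum_ite_eq,
        Finset.sum_ite_eq']
    have hle : (M.submatrix f g).rank ≤ M.rank := by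
      rw [hfact]
      exact le_trans (Matrix.rank_mul_le_left _ _)
        (Matrix.rank_mul_le_right _ _)
    omega
  -- all 4×4 minors vanish implies the Pfaffian quadrics vanish
  have back : (∀ f g : Fin 4 → Fin s, (M.submatrix f g).det = 0) →
      ∀ i j k l : Fin s, i < j → j < k → k < l →
        M i j * M k l + M i k * M j l + M i l * M j k = 0 := by
    intro h i j k l _ _ _
    have hd := h ![i, j, k, l] ![i, j, k, l]
    rw [det4_aux K (M.submatrix ![i, j, k, l] ![i, j, k, l]) (fun a b => hM _ _) (fun a => hdiag _)] at hd
    have := sq_eq_zero_iff.mp hd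
    simpa [Matrix.submatrix_apply] using this
  -- the Pfaffian quadrics vanish implies rank ≤ 2
  have ranklemma : (∀ i j k l : Fin s, i < j → j < k → k < l →
      M i j * M k l + M i k * M j l + M i l * M j k = 0) → M.rank ≤ 2 := by
    intro hyp
    have key := pf_all K M hM hdiag hyp
    by_cases hM0 : M = 0
    · rw [hM0, Matrix.rank_zero]; omega
    · have hex : ∃ i j, M i j ≠ 0 := by
        by_contra h
        push_neg at h
        exact hM0 (by ext i j; simpa using h i j)
      obtain ⟨i, j, hij⟩ := hex
      set C : Matrix (Fin s) (Fin 2) K :=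
        Matrix.of fun k t => if t = 0 then M j k / M i j else M i k / M i j with hC
      set D : Matrix (Fin 2) (Fin s) K :=
        Matrix.of fun t l => if t = 0 then M i l else M j l with hD
      have hMCD : M = C * D := by
        ext k l
        rw [Matrix.mul_apply, Fin.sum_univ_two]
        simp only [hC, hD, Matrix.of_apply, if_pos rfl, if_neg (one_ne_zero (α := Fin 2)), if_true]
        have hk := key i j k l
        field_simp
        linear_combination hk - (M j k * M i l + M i k * M j l) * h2
      rw [hMCD]
      exact le_trans (Matrix.rank_mul_le_left C D)
        (by simpa using Matrix.rank_le_card_width C)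
  exact ⟨⟨fun h => back (minors h), ranklemma⟩,
    ⟨fun h => minors (ranklemma h), back⟩⟩
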